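/- There is no regular closed curve in the hyperbolic plane whose geodesic curvature is bounded by 1 in absolute value. Precisely: there is no C² curve γ : [0,1] → ℂ with γ'(t) ≠ 0 and Im γ(t) > 0 for all t, satisfying γ(1) = γ(0) and γ'(1) = γ'(0), whose hyperbolic geodesic curvature satisfies |κ(t)| ≤ 1 for all t ∈ [0,1]. -/

import Mathlib

open Set

/-- Euclidean curvature of a plane curve `γ : ℝ → ℂ`. -/
noncomputable def kappaE (γ : ℝ → ℂ) (t : ℝ) : ℝ :=
  ((starRingEnd ℂ) (deriv γ t) * deriv (deriv γ) t).im / ‖deriv γ t‖ ^ 3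

/-- Hyperbolic geodesic curvature in the upper half-plane model. -/
noncomputable def kappaH (γ : ℝ → ℂ) (t : ℝ) : ℝ :=
  (γ t).im * kappaE γ t + (deriv γ t).re / ‖deriv γ t‖

private lemma key_alg (a b a2 b2 u v k : ℝ) (hu : u ≠ 0) (hv : 0 < v) (hv2 : v^2 = a^2+b^2)
    (hk : k = u * ((a*b2 - b*a2)/v^3) + a/v) :
    (-b2 * (u*v) - (-b) * (b*v + u*((a*a2+b*b2)/v))) / (u*v)^2 = (v - k*a)/u^2 := by
  subst hk
  have hv' : v ≠ 0 := ne_of_gt hv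
  field_simp
  ring_nf
  linear_combination (-(b2*u) - v^2) * hv2

/-- The derivative of `1 / Im γ` with respect to hyperbolic arclength. -/
private noncomputable def psiAux (γ : ℝ → ℂ) (t : ℝ) : ℝ :=
  -(deriv γ t).im / ((γ t).im * ‖deriv γ t‖)

private lemma psi_hasDeriv (γ : ℝ → ℂ) (hγd : Differentiable ℝ γ)
    (hγd2 : Differentiable ℝ (deriv γ)) (t : ℝ) (hne : deriv γ t ≠ 0)
    (hupos : 0 < (γ t).im) :
    HasDerivAt (psiAux γ)
      ((‖deriv γ t‖ - kappaH γ t * (deriv γ t).re) / ((γ t).im)^2) t := by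
  have hγt : HasDerivAt γ (deriv γ t) t := (hγd t).hasDerivAt
  have hdt : HasDerivAt (deriv γ) (deriv (deriv γ) t) t := (hγd2 t).hasDerivAt
  have hu' : HasDerivAt (fun s => (γ s).im) ((deriv γ t).im) t :=
    Complex.imCLM.hasFDerivAt.comp_hasDerivAt t hγt
  have hb' : HasDerivAt (fun s => (deriv γ s).im) ((deriv (deriv γ) t).im) t :=
    Complex.imCLM.hasFDerivAt.comp_hasDerivAt t hdt
  have ha' : HasDerivAt (fun s => (deriv γ s).re) ((deriv (deriv γ) t).re) t :=
    Complex.reCLM.hasFDerivAt.comp_hasDerivAt t hdt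
  set a := (deriv γ t).re with ha
  set b := (deriv γ t).im with hb
  set a2 := (deriv (deriv γ) t).re with ha2
  set b2 := (deriv (deriv γ) t).im with hb2
  have hgne : a^2 + b^2 ≠ 0 := by
    have h := Complex.normSq_pos.mpr hne
    rw [Complex.normSq_apply] at h
    nlinarith
  have hgpos : 0 < a^2 + b^2 := lt_of_le_of_ne (by positivity) (Ne.symm hgne)
  have hns : HasDerivAt (fun s => (deriv γ s).re^2 + (deriv γ s).im^2)
      (2*a*a2 + 2*b*b2) t := by
    have h := (ha'.pow 2).add (hb'.pow 2)
    convert h using 1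
    · rfl
    · rfl
    · rfl
    push_cast
    ring
  have hveq : (fun s => ‖deriv γ s‖)
      = fun s => Real.sqrt ((deriv γ s).re^2 + (deriv γ s).im^2) := by
    funext s
    rw [Complex.norm_def, Complex.normSq_apply]
    ring_nf
  have hvpos : 0 < ‖deriv γ t‖ := norm_pos_iff.mpr hne
  have hvt : ‖deriv γ t‖ = Real.sqrt (a^2 + b^2) := by
    rw [Complex.norm_def, Complex.normSq_apply]; ring_nf; rw [← ha, ← hb]
  have hv' : HasDerivAt (fun s => ‖deriv γ s‖)
      ((a*a2 + b*b2) / ‖deriv γ t‖) t := by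
    rw [hveq]
    have hs := (Real.hasDerivAt_sqrt hgne).comp t hns
    convert hs using 1
    · rfl
    · rfl
    · rfl
    rw [hvt]
    have hsq : Real.sqrt (a^2+b^2) ≠ 0 := by
      rw [Real.sqrt_ne_zero' ]; exact hgpos
    field_simp
  have hden : (γ t).im * ‖deriv γ t‖ ≠ 0 :=
    (mul_pos hupos hvpos).ne'
  have hψ' := (hb'.neg).div (hu'.mul hv') hden
  have hv2 : (‖deriv γ t‖)^2 = a^2 + b^2 := by
    rw [Complex.sq_norm, Complex.normSq_apply]; ring
  have hkk : kappaH γ t = (γ t).im * ((a*b2 - b*a2)/(‖deriv γ t‖)^3)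
      + a/(‖deriv γ t‖) := by
    simp only [kappaH, kappaE, Complex.mul_im, Complex.conj_re, Complex.conj_im]
    rw [← ha, ← hb, ← ha2, ← hb2]
    ring
  have hkey := key_alg a b a2 b2 ((γ t).im) (‖deriv γ t‖) (kappaH γ t)
    (ne_of_gt hupos) hvpos hv2 hkk
  have : HasDerivAt (psiAux γ)
      ((-b2 * ((γ t).im * ‖deriv γ t‖) -
        (-b) * (b * ‖deriv γ t‖ + (γ t).im * ((a*a2 + b*b2) / ‖deriv γ t‖))) /
        ((γ t).im * ‖deriv γ t‖)^2) t := by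
    convert hψ' using 2 <;> rfl
  rw [hkey] at this
  exact this

/-- There is no regular closed curve in the hyperbolic plane whose geodesic curvature
is bounded by `1` in absolute value. -/
theorem no_closed_curve_of_small_curvature :
    ¬ ∃ γ : ℝ → ℂ, ContDiff ℝ 2 γ ∧
      (∀ t ∈ Icc (0:ℝ) 1, deriv γ t ≠ 0) ∧
      (∀ t ∈ Icc (0:ℝ) 1, 0 < (γ t).im) ∧
      (∀ t ∈ Icc (0:ℝ) 1, |kappaH γ t| ≤ 1) ∧
      γ 1 = γ 0 ∧ deriv γ 1 = deriv γ 0 := by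
  rintro ⟨γ, hC, hd, him, hκ, hcl, hcl'⟩
  have h0mem : (0:ℝ) ∈ Icc (0:ℝ) 1 := by norm_num
  have h1mem : (1:ℝ) ∈ Icc (0:ℝ) 1 := by norm_num
  have hγd : Differentiable ℝ γ := hC.differentiable (by norm_num)
  have hC1 : ContDiff ℝ 1 (deriv γ) := by
    rw [show ((2:WithTop ℕ∞)) = 1 + 1 by norm_num, contDiff_succ_iff_deriv] at hC
    exact hC.2.2
  have hγd2 : Differentiable ℝ (deriv γ) := hC1.differentiable (by norm_num)
  have hdc : Continuous (deriv γ) := hγd2.continuous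
  have hvpos : ∀ t ∈ Icc (0:ℝ) 1, 0 < ‖deriv γ t‖ :=
    fun t ht => norm_pos_iff.mpr (hd t ht)
  have hden : ∀ t ∈ Icc (0:ℝ) 1, (γ t).im * ‖deriv γ t‖ ≠ 0 :=
    fun t ht => (mul_pos (him t ht) (hvpos t ht)).ne'
  -- ψ is monotone on [0,1]
  have hder : ∀ t ∈ Icc (0:ℝ) 1, HasDerivAt (psiAux γ)
      ((‖deriv γ t‖ - kappaH γ t * (deriv γ t).re) / ((γ t).im)^2) t :=
    fun t ht => psi_hasDeriv γ hγd hγd2 t (hd t ht) (him t ht)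
  have hcψ : ContinuousOn (psiAux γ) (Icc 0 1) := by
    apply ContinuousOn.div
    · exact ((Complex.continuous_im.comp hdc).neg).continuousOn
    · exact ((Complex.continuous_im.comp hγd.continuous).mul
        (continuous_norm.comp hdc)).continuousOn
    · exact hden
  have hmono : MonotoneOn (psiAux γ) (Icc 0 1) := by
    apply monotoneOn_of_deriv_nonneg (convex_Icc 0 1) hcψ
    · intro t ht
      rw [interior_Icc] at ht
      exact (hder t (Ioo_subset_Icc_self ht)).differentiableAt.differentiableWithinAt
    · intro t ht
      rw [interior_Icc] at ht
      have hti := Ioo_subset_Icc_self ht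
      rw [(hder t hti).deriv]
      apply div_nonneg _ (sq_nonneg _)
      have hk := hκ t hti
      have habs : |(deriv γ t).re| ≤ ‖deriv γ t‖ := Complex.abs_re_le_norm _
      have h1 : kappaH γ t * (deriv γ t).re ≤ |kappaH γ t * (deriv γ t).re| :=
        le_abs_self _
      rw [abs_mul] at h1
      have h2 : |kappaH γ t| * |(deriv γ t).re| ≤ 1 * |(deriv γ t).re| :=
        mul_le_mul_of_nonneg_right hk (abs_nonneg _)
      linarith
  -- ψ is constant on [0,1]
  have hψ10 : psiAux γ 1 = psiAux γ 0 := by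
    simp only [psiAux, hcl, hcl']
  have hψc : ∀ t ∈ Icc (0:ℝ) 1, psiAux γ t = psiAux γ 0 := by
    intro t ht
    have h1 := hmono h0mem ht ht.1
    have h2 := hmono ht h1mem ht.2
    rw [hψ10] at h2
    linarith
  set c := psiAux γ 0 with hc_def
  have hbeq : ∀ t ∈ Icc (0:ℝ) 1, (deriv γ t).im
      = -c * ((γ t).im * ‖deriv γ t‖) := by
    intro t ht
    have h := hψc t ht
    rw [show psiAux γ t = -(deriv γ t).im / ((γ t).im * ‖deriv γ t‖) from rfl,
      div_eq_iff (hden t ht)] at h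
    linarith [h]
  have himderiv : ∀ t, deriv (fun s => (γ s).im) t = (deriv γ t).im := fun t =>
    (Complex.imCLM.hasFDerivAt.comp_hasDerivAt t (hγd t).hasDerivAt).deriv
  have hrederiv : ∀ t, deriv (fun s => (γ s).re) t = (deriv γ t).re := fun t =>
    (Complex.reCLM.hasFDerivAt.comp_hasDerivAt t (hγd t).hasDerivAt).deriv
  have hcim : Continuous (fun s => (γ s).im) := Complex.continuous_im.comp hγd.continuous
  have hcre : Continuous (fun s => (γ s).re) := Complex.continuous_re.comp hγd.continuous
  have him10 : (γ 1).im = (γ 0).im := by rw [hcl]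
  have hre10 : (γ 1).re = (γ 0).re := by rw [hcl]
  rcases lt_trichotomy c 0 with hc | hc | hc
  · -- c < 0 : Im γ strictly increasing
    have hsm : StrictMonoOn (fun s => (γ s).im) (Icc 0 1) := by
      apply strictMonoOn_of_deriv_pos (convex_Icc 0 1) hcim.continuousOn
      intro t ht
      rw [interior_Icc] at ht
      have hti := Ioo_subset_Icc_self ht
      rw [himderiv, hbeq t hti]
      have := mul_pos (him t hti) (hvpos t hti)
      nlinarith
    have := hsm h0mem h1mem zero_lt_one
    simp only [him10] at this
    exact lt_irrefl _ this
  · -- c = 0 : Im deriv γ ≡ 0, so Re deriv γ has constant sign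
    have hb0 : ∀ t ∈ Icc (0:ℝ) 1, (deriv γ t).im = 0 := by
      intro t ht; rw [hbeq t ht, hc]; ring
    have hane : ∀ t ∈ Icc (0:ℝ) 1, (deriv γ t).re ≠ 0 := by
      intro t ht h
      exact hd t ht (by
        apply Complex.ext <;> simp [h, hb0 t ht])
    have hca : ContinuousOn (fun t => (deriv γ t).re) (Icc 0 1) :=
      (Complex.continuous_re.comp hdc).continuousOn
    rcases lt_or_gt_of_ne (hane 0 h0mem) with hneg | hpos
    · have hall : ∀ t ∈ Icc (0:ℝ) 1, (deriv γ t).re < 0 := by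
        intro t ht
        rcases lt_or_gt_of_ne (hane t ht) with h | h
        · exact h
        · exfalso
          have hsub : Icc (0:ℝ) t ⊆ Icc 0 1 := Icc_subset_Icc le_rfl ht.2
          obtain ⟨s, hs, hs0⟩ := intermediate_value_Icc ht.1 (hca.mono hsub)
            (⟨le_of_lt hneg, le_of_lt h⟩ : (0:ℝ) ∈ Icc ((deriv γ 0).re) ((deriv γ t).re))
          exact hane s (hsub hs) hs0
      have hsa : StrictAntiOn (fun s => (γ s).re) (Icc 0 1) := by
        apply strictAntiOn_of_deriv_neg (convex_Icc 0 1) hcre.continuousOn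
        intro t ht
        rw [interior_Icc] at ht
        rw [hrederiv]
        exact hall t (Ioo_subset_Icc_self ht)
      have := hsa h0mem h1mem zero_lt_one
      simp only [hre10] at this
      exact lt_irrefl _ this
    · have hall : ∀ t ∈ Icc (0:ℝ) 1, 0 < (deriv γ t).re := by
        intro t ht
        rcases lt_or_gt_of_ne (hane t ht) with h | h
        · exfalso
          have hsub : Icc (0:ℝ) t ⊆ Icc 0 1 := Icc_subset_Icc le_rfl ht.2
          obtain ⟨s, hs, hs0⟩ := intermediate_value_Icc' ht.1 (hca.mono hsub)
            (⟨le_of_lt h, le_of_lt hpos⟩ : (0:ℝ) ∈ Icc ((deriv γ t).re) ((deriv γ 0).re))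
          exact hane s (hsub hs) hs0
        · exact h
      have hsm : StrictMonoOn (fun s => (γ s).re) (Icc 0 1) := by
        apply strictMonoOn_of_deriv_pos (convex_Icc 0 1) hcre.continuousOn
        intro t ht
        rw [interior_Icc] at ht
        rw [hrederiv]
        exact hall t (Ioo_subset_Icc_self ht)
      have := hsm h0mem h1mem zero_lt_one
      simp only [hre10] at this
      exact lt_irrefl _ this
  · -- c > 0 : Im γ strictly decreasing
    have hsa : StrictAntiOn (fun s => (γ s).im) (Icc 0 1) := by
      apply strictAntiOn_of_deriv_neg (convex_Icc 0 1) hcim.continuousOn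
      intro t ht
      rw [interior_Icc] at ht
      have hti := Ioo_subset_Icc_self ht
      rw [himderiv, hbeq t hti]
      have := mul_pos (him t hti) (hvpos t hti)
      nlinarith
    have := hsa h0mem h1mem zero_lt_one
    simp only [him10] at this
    exact lt_irrefl _ this
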